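/- Let U, V be polynomials of degree N whose product has nonvanishing (N+1)-st derivative on [-1,1], and let the interpolation nodes be N+1 distinct points symmetric about 0 in [-1,1] with N ≥ 1. Define W = I^N(UV) (interpolant on [-1,1]) and W_L = I^N((UV) ∘ σ_L) where σ_L(ξ) = (ξ-1)/2 (interpolant of the restricted product at the same nodes). Then W ∘ σ_L ≠ W_L as polynomials. -/

import Mathlib

open Polynomial

lemma iteratedDeriv_polyEval (n : ℕ) (p : ℝ[X]) :
    iteratedDeriv n (fun y => p.eval y) = fun y => (derivative^[n] p).eval y := by
  induction n with
  | zero => rfl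
  | succ k ih =>
      funext y
      rw [iteratedDeriv_succ, ih, Function.iterate_succ_apply']
      exact Polynomial.deriv (p := derivative^[k] p) (x := y)

lemma poly_iterated_rolle : ∀ (k : ℕ) (p : ℝ[X]) (t : Fin (k+1) → ℝ),
    StrictMono t → (∀ i, p.eval (t i) = 0) →
    ∃ x ∈ Set.Icc (t 0) (t (Fin.last k)), (derivative^[k] p).eval x = 0 := by
  intro k
  induction k with
  | zero =>
      intro p t _ h0
      exact ⟨t 0, ⟨le_refl _, le_refl _⟩, h0 0⟩
  | succ k ih =>
      intro p t ht h0
      have key : ∀ i : Fin (k+1), ∃ c ∈ Set.Ioo (t i.castSucc) (t i.succ),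
          p.derivative.eval c = 0 := by
        intro i
        have hlt : t i.castSucc < t i.succ := ht Fin.castSucc_lt_succ
        obtain ⟨c, hc, hc0⟩ := exists_deriv_eq_zero hlt
          ((Polynomial.continuous p).continuousOn) (by rw [h0, h0])
        refine ⟨c, hc, ?_⟩
        rwa [Polynomial.deriv (p := p) (x := c)] at hc0
      choose u hu1 hu2 using key
      have humono : StrictMono u := by
        intro i j hij
        have h1 : t i.succ ≤ t j.castSucc := by
          apply ht.monotone
          simp only [Fin.le_def, Fin.val_succ, Fin.coe_castSucc]
          exact hij
        exact lt_of_lt_of_le (hu1 i).2 (le_trans h1 (hu1 j).1.le)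
      obtain ⟨x, hx, hx0⟩ := ih p.derivative u humono hu2
      refine ⟨x, ⟨?_, ?_⟩, ?_⟩
      · calc t 0 = t ((0 : Fin (k+1)).castSucc) := by norm_num
          _ ≤ u 0 := (hu1 0).1.le
          _ ≤ x := hx.1
      · calc x ≤ u (Fin.last k) := hx.2
          _ ≤ t ((Fin.last k).succ) := (hu1 _).2.le
          _ = t (Fin.last (k+1)) := by rw [Fin.succ_last]
      · rwa [Function.iterate_succ_apply]

/-- Appendix theorem: with symmetric distinct nodes in `[-1,1]`, `N ≥ 1`, and
`U, V` of degree `N` whose product has nonvanishing `(N+1)`-st derivative on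
`[-1,1]`, the restriction of the global interpolant `W = I^N(UV)` to the left
half-interval (via `σ_L(ξ) = (ξ-1)/2`) differs from the interpolant
`W_L = I^N((UV) ∘ σ_L)` of the restricted product. -/
theorem subinterval_interpolant_ne_restricted_interpolant
    (N : ℕ) (hN : 1 ≤ N) (U V : ℝ[X]) (hU : U.natDegree = N) (hV : V.natDegree = N)
    (hderiv : ∀ x ∈ Set.Icc (-1 : ℝ) 1,
        iteratedDeriv (N + 1) (fun y => (U * V).eval y) x ≠ 0)
    (s : Fin (N + 1) → ℝ) (hs : Function.Injective s)
    (hmem : ∀ i, s i ∈ Set.Icc (-1 : ℝ) 1)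
    (hsym : ∀ i, ∃ j, s j = -(s i)) :
    (Lagrange.interpolate Finset.univ s (fun i => (U * V).eval (s i))).comp
        (C (1/2 : ℝ) * (X - 1))
      ≠ Lagrange.interpolate Finset.univ s
          (fun i => ((U * V).comp (C (1/2 : ℝ) * (X - 1))).eval (s i)) := by
  intro heq
  set P : ℝ[X] := U * V with hP
  set σ : ℝ[X] := C (1/2 : ℝ) * (X - 1) with hσ
  set W : ℝ[X] := Lagrange.interpolate Finset.univ s (fun i => P.eval (s i)) with hW
  have hU0 : U ≠ 0 := fun h => by simp [h] at hU; omega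
  have hV0 : V ≠ 0 := fun h => by simp [h] at hV; omega
  have hPdeg : P.natDegree = 2 * N := by
    rw [hP, natDegree_mul hU0 hV0, hU, hV]; ring
  have hinj : Set.InjOn s (Finset.univ : Finset (Fin (N+1))) := hs.injOn
  have hWdeg : W.natDegree < N + 1 := by
    rcases eq_or_ne W 0 with h | h
    · simp [h]
    · rw [natDegree_lt_iff_degree_lt h]
      have := Lagrange.degree_interpolate_lt (fun i => P.eval (s i)) hinj
      simpa [hW] using this
  set E : ℝ[X] := P - W with hE
  -- evaluation at the σ-images of the nodes
  have hσeval : ∀ x : ℝ, σ.eval x = (x - 1) / 2 := by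
    intro x; simp [hσ]; ring
  have hnodeval : ∀ i, E.eval (s i) = 0 := by
    intro i
    have h1 : W.eval (s i) = P.eval (s i) :=
      Lagrange.eval_interpolate_at_node (fun i => P.eval (s i)) hinj (Finset.mem_univ i)
    rw [hE, eval_sub, h1, sub_self]
  have hceval : ∀ i, E.eval ((s i - 1) / 2) = 0 := by
    intro i
    have h1 : (W.comp σ).eval (s i)
        = (Lagrange.interpolate Finset.univ s
            (fun i => (P.comp σ).eval (s i))).eval (s i) := by rw [heq]
    rw [Lagrange.eval_interpolate_at_node _ hinj (Finset.mem_univ i), eval_comp,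
      eval_comp, hσeval] at h1
    simp [hE, h1]
  -- any root of E in [-1,1] is a node
  have hroot : ∀ x ∈ Set.Icc (-1 : ℝ) 1, E.eval x = 0 →
      x ∈ Finset.image s Finset.univ := by
    intro x hx hx0
    by_contra hxs
    set T : Finset ℝ := insert x (Finset.image s Finset.univ) with hT
    have hcardim : (Finset.image s Finset.univ).card = N + 1 := by
      rw [Finset.card_image_of_injective _ hs, Finset.card_univ, Fintype.card_fin]
    have hcard : T.card = N + 2 := by
      rw [hT, Finset.card_insert_of_notMem hxs, hcardim]
    have hTmem : ∀ y ∈ T, y ∈ Set.Icc (-1 : ℝ) 1 := by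
      intro y hy
      rcases Finset.mem_insert.mp hy with h | h
      · rwa [h]
      · obtain ⟨i, _, rfl⟩ := Finset.mem_image.mp h; exact hmem i
    have hT0 : ∀ y ∈ T, E.eval y = 0 := by
      intro y hy
      rcases Finset.mem_insert.mp hy with h | h
      · rwa [h]
      · obtain ⟨i, _, rfl⟩ := Finset.mem_image.mp h; exact hnodeval i
    set t : Fin (N + 2) → ℝ := fun i => (T.orderIsoOfFin hcard i : ℝ) with ht
    have htmono : StrictMono t := fun i j hij => (T.orderIsoOfFin hcard).lt_iff_lt.mpr hij
    obtain ⟨y, hy, hy0⟩ := poly_iterated_rolle (N + 1) E t htmono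
      (fun i => hT0 _ (T.orderIsoOfFin hcard i).2)
    have hyI : y ∈ Set.Icc (-1 : ℝ) 1 := by
      constructor
      · exact le_trans (hTmem _ (T.orderIsoOfFin hcard 0).2).1 hy.1
      · exact le_trans hy.2 (hTmem _ (T.orderIsoOfFin hcard (Fin.last (N+1))).2).2
    apply hderiv y hyI
    rw [iteratedDeriv_polyEval]
    have : derivative^[N + 1] E = derivative^[N + 1] P := by
      rw [hE, iterate_derivative_sub, iterate_derivative_eq_zero hWdeg, sub_zero]
    rw [← this]; exact hy0
  -- the σ-images of the nodes form the same set as the nodes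
  set S : Finset ℝ := Finset.image s Finset.univ with hS
  have hcinj : Function.Injective (fun i : Fin (N+1) => (s i - 1) / 2) := by
    intro i j hij
    apply hs
    simp only at hij
    linarith
  have hsub : Finset.image (fun i : Fin (N+1) => (s i - 1) / 2) Finset.univ ⊆ S := by
    intro y hy
    obtain ⟨i, _, rfl⟩ := Finset.mem_image.mp hy
    have hi := hmem i
    exact hroot _ ⟨by linarith [hi.1], by linarith [hi.2]⟩ (hceval i)
  have hSeq : Finset.image (fun i : Fin (N+1) => (s i - 1) / 2) Finset.univ = S := by
    apply Finset.eq_of_subset_of_card_le hsub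
    rw [Finset.card_image_of_injective _ hcinj, Finset.card_image_of_injective _ hs]
  -- max argument
  have hSne : S.Nonempty := ⟨s 0, Finset.mem_image.mpr ⟨0, Finset.mem_univ _, rfl⟩⟩
  set m : ℝ := S.max' hSne with hm
  obtain ⟨i, _, him⟩ := Finset.mem_image.mp
    (show m ∈ Finset.image (fun i : Fin (N+1) => (s i - 1) / 2) Finset.univ by
      rw [hSeq]; exact S.max'_mem hSne)
  have hsm : s i ≤ m := S.le_max' _ (Finset.mem_image.mpr ⟨i, Finset.mem_univ _, rfl⟩)
  have him' : (s i - 1) / 2 = m := him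
  have hmle : m ≤ -1 := by linarith
  -- all nodes equal -1, contradicting injectivity
  have hall : ∀ j, s j = -1 := by
    intro j
    have h1 := (hmem j).1
    have h2 : s j ≤ m := S.le_max' _ (Finset.mem_image.mpr ⟨j, Finset.mem_univ _, rfl⟩)
    linarith
  have h01 : (⟨0, by omega⟩ : Fin (N+1)) ≠ ⟨1, by omega⟩ := fun h => by
    have := congrArg Fin.val h; simp at this
  exact h01 (hs (by rw [hall, hall]))
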